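/- Let h : [0,1] → ℝ be twice differentiable and strictly convex with h'' > 0, let d ≥ 1, and suppose there exist constants c ∈ ℝ and λ > 0 such that for every y in a subset Y of the d-dimensional probability simplex one has ∑_{i=1}^d h(y_i) + 2∑_{i=1}^d (h'(y_i) − c)²/h''(y_i) + λ ≤ 0. Define H(x) = √(‖x‖₁) · ∑_{i=1}^d h(x_i/‖x‖₁) for x ∈ ℝ₊^d. Then at every x ∈ ℝ₊^d with x/‖x‖₁ ∈ Y, the Hessian satisfies ∇²H(x) ⪰ (λ/4)‖x‖₁^{−3/2} J + (1/2)‖x‖₁^{−7/2} ∑_{i=1}^d x_i² h''(x_i/‖x‖₁) z_i z_iᵀ, where J is the d×d all-ones matrix and z_i = 𝟏_d − (‖x‖₁/x_i) e_i. -/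

import Mathlib

open Real Finset

lemma auxS {d : ℕ} (y : Fin d → ℝ) :
    HasFDerivAt (fun z : Fin d → ℝ => ∑ i, z i)
      (∑ i, ContinuousLinearMap.proj i (R := ℝ) (φ := fun _ : Fin d => ℝ)) y :=
  HasFDerivAt.fun_sum (fun i _ => hasFDerivAt_apply i y)

lemma auxD1 {d : ℕ} (hd : 0 < d) (h : ℝ → ℝ)
    (hdiff : ∀ t ∈ Set.Icc (0:ℝ) 1, DifferentiableAt ℝ h t)
    (y : Fin d → ℝ) (hy : ∀ i, 0 < y i) (v : Fin d → ℝ) :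
    DifferentiableAt ℝ (fun z : Fin d → ℝ => Real.sqrt (∑ i, z i) * ∑ i, h (z i / ∑ j, z j)) y ∧
    fderiv ℝ (fun z : Fin d → ℝ => Real.sqrt (∑ i, z i) * ∑ i, h (z i / ∑ j, z j)) y v =
      (∑ i, v i) / (2 * Real.sqrt (∑ i, y i)) * (∑ i, h (y i / ∑ j, y j))
      + Real.sqrt (∑ i, y i) * ∑ i, deriv h (y i / ∑ j, y j) *
          ((v i * (∑ j, y j) - y i * (∑ j, v j)) / (∑ j, y j)^2) := by
  have hs : (0:ℝ) < ∑ i, y i :=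
    Finset.sum_pos (fun i _ => hy i) ⟨⟨0, hd⟩, mem_univ _⟩
  have hmem : ∀ i, y i / (∑ j, y j) ∈ Set.Icc (0:ℝ) 1 := by
    intro i
    constructor
    · exact div_nonneg (hy i).le hs.le
    · rw [div_le_one hs]
      exact Finset.single_le_sum (fun j _ => (hy j).le) (mem_univ i)
  have hS := auxS y
  have hinv := (hasDerivAt_inv hs.ne').comp_hasFDerivAt y hS
  have hri := fun i : Fin d => (hasFDerivAt_apply i y).mul hinv
  have hhi := fun i : Fin d =>
    HasDerivAt.comp_hasFDerivAt_of_eq y ((hdiff _ (hmem i)).hasDerivAt) (hri i)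
      (by simp [Function.comp, div_eq_mul_inv])
  have hsum := HasFDerivAt.fun_sum (u := univ) (fun i _ => hhi i)
  have hsq := (Real.hasDerivAt_sqrt hs.ne').comp_hasFDerivAt y hS
  have hmul := hsq.mul hsum
  have hmul' := hmul.congr_of_eventuallyEq
    (f₁ := fun z : Fin d → ℝ => Real.sqrt (∑ i, z i) * ∑ i, h (z i / ∑ j, z j))
    (Filter.Eventually.of_forall (fun z => by simp [Function.comp, div_eq_mul_inv]))
  refine ⟨hmul'.differentiableAt, ?_⟩
  rw [hmul'.fderiv]
  simp only [ContinuousLinearMap.add_apply, ContinuousLinearMap.coe_smul',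
    Pi.smul_apply, ContinuousLinearMap.coe_sum', Finset.sum_apply,
    ContinuousLinearMap.proj_apply, smul_eq_mul, Function.comp, ← div_eq_mul_inv]
  have h2 : (∑ j, y j) ≠ 0 := hs.ne'
  have key : ∀ i : Fin d,
      deriv h (y i / ∑ j, y j) *
        (y i * (-((∑ j, y j) ^ 2)⁻¹ * ∑ x, v x) + (∑ j, y j)⁻¹ * v i)
      = deriv h (y i / ∑ j, y j) *
        ((v i * ∑ j, y j - y i * ∑ x, v x) / (∑ j, y j) ^ 2) := by
    intro i; field_simp; ring
  simp only [key]
  simp only [Pi.mul_apply, Function.comp_apply, ← div_eq_mul_inv, inv_mul_eq_div]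
  ring

lemma auxD2 {d : ℕ} (hd : 0 < d) (h : ℝ → ℝ)
    (hdiff : ∀ t ∈ Set.Icc (0:ℝ) 1, DifferentiableAt ℝ h t ∧ DifferentiableAt ℝ (deriv h) t)
    (x : Fin d → ℝ) (hx : ∀ i, 0 < x i) (v : Fin d → ℝ) :
    fderiv ℝ (fun z : Fin d → ℝ =>
        (∑ i, v i) / (2 * Real.sqrt (∑ i, z i)) * (∑ i, h (z i / ∑ j, z j))
        + Real.sqrt (∑ i, z i) * ∑ i, deriv h (z i / ∑ j, z j) *
            ((v i * (∑ j, z j) - z i * (∑ j, v j)) / (∑ j, z j)^2)) x v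
    = -((∑ i, v i)^2 / (4 * (Real.sqrt (∑ i, x i))^3)) * (∑ i, h (x i / ∑ j, x j))
      - ((∑ i, v i) / Real.sqrt (∑ i, x i)) *
          ∑ i, deriv h (x i / ∑ j, x j) * ((v i * (∑ j, x j) - x i * (∑ j, v j)) / (∑ j, x j)^2)
      + Real.sqrt (∑ i, x i) *
          ∑ i, deriv (deriv h) (x i / ∑ j, x j) *
            ((v i * (∑ j, x j) - x i * (∑ j, v j)) / (∑ j, x j)^2)^2 := by
  have hs : (0:ℝ) < ∑ i, x i :=
    Finset.sum_pos (fun i _ => hx i) ⟨⟨0, hd⟩, mem_univ _⟩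
  have hsqpos : (0:ℝ) < Real.sqrt (∑ i, x i) := Real.sqrt_pos.mpr hs
  have hmem : ∀ i, x i / (∑ j, x j) ∈ Set.Icc (0:ℝ) 1 := by
    intro i
    exact ⟨div_nonneg (hx i).le hs.le, by
      rw [div_le_one hs]
      exact Finset.single_le_sum (fun j _ => (hx j).le) (mem_univ i)⟩
  have hS := auxS x
  have hsq := (Real.hasDerivAt_sqrt hs.ne').comp_hasFDerivAt x hS
  have h2sq := hsq.const_mul 2
  have hinv2 := HasDerivAt.comp_hasFDerivAt_of_eq x
    (hasDerivAt_inv (x := 2 * Real.sqrt (∑ i, x i)) (by positivity)) h2sq (by simp [Function.comp])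
  have hA := hinv2.const_mul (∑ i, v i)
  -- ratios and h ∘ ratio
  have hinv := (hasDerivAt_inv hs.ne').comp_hasFDerivAt x hS
  have hri := fun i : Fin d => (hasFDerivAt_apply i x).mul hinv
  have hhi := fun i : Fin d =>
    HasDerivAt.comp_hasFDerivAt_of_eq x ((hdiff _ (hmem i)).1.hasDerivAt) (hri i)
      (by simp [Function.comp, div_eq_mul_inv])
  have hPhi := HasFDerivAt.fun_sum (u := univ) (fun i _ => hhi i)
  have hP1 := hA.mul hPhi
  -- deriv h ∘ ratio
  have hdi := fun i : Fin d =>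
    HasDerivAt.comp_hasFDerivAt_of_eq x ((hdiff _ (hmem i)).2.hasDerivAt) (hri i)
      (by simp [Function.comp, div_eq_mul_inv])
  -- q i
  have hnum := fun i : Fin d => (hS.const_mul (v i)).sub ((hasFDerivAt_apply i x).mul_const (∑ j, v j))
  have hS2 := HasDerivAt.comp_hasFDerivAt x (hasDerivAt_pow 2 (∑ i, x i)) hS
  have hinvpow := HasDerivAt.comp_hasFDerivAt_of_eq x
    (hasDerivAt_inv (x := (∑ i, x i)^2) (by positivity)) hS2 (by simp [Function.comp])
  have hq := fun i : Fin d => (hnum i).mul hinvpow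
  have hterm := fun i : Fin d => (hdi i).mul (hq i)
  have hsum2 := HasFDerivAt.fun_sum (u := univ) (fun i _ => hterm i)
  have hP2 := hsq.mul hsum2
  have hG0 := hP1.add hP2
  have hG := hG0.congr_of_eventuallyEq
    (f₁ := fun z : Fin d → ℝ =>
        (∑ i, v i) / (2 * Real.sqrt (∑ i, z i)) * (∑ i, h (z i / ∑ j, z j))
        + Real.sqrt (∑ i, z i) * ∑ i, deriv h (z i / ∑ j, z j) *
            ((v i * (∑ j, z j) - z i * (∑ j, v j)) / (∑ j, z j)^2))
    (Filter.Eventually.of_forall (fun z => by simp [Function.comp, div_eq_mul_inv]))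
  rw [hG.fderiv]
  simp only [ContinuousLinearMap.add_apply, ContinuousLinearMap.sub_apply,
    ContinuousLinearMap.coe_smul', Pi.smul_apply, ContinuousLinearMap.coe_sum',
    Finset.sum_apply, ContinuousLinearMap.proj_apply, smul_eq_mul,
    ContinuousLinearMap.smulRight_apply, ContinuousLinearMap.coe_sub', Pi.sub_apply,
    Function.comp]
  have hsx : Finset.univ.sum x = ∑ j, x j := rfl
  simp only [hsx, ← div_eq_mul_inv]
  have key0 : ∀ i : Fin d, v i * (∑ i, v i) - (∑ i, v i) * v i = 0 := fun i => by ring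
  simp only [key0, mul_zero, add_zero, pow_one, Nat.cast_ofNat,
    show (2:ℕ) - 1 = 1 from rfl]
  have key1 : ∀ i : Fin d,
      x i * (-((∑ j, x j) ^ 2)⁻¹ * ∑ i, v i) + (∑ j, x j)⁻¹ * v i
      = (v i * (∑ j, x j) - x i * (∑ i, v i)) / (∑ j, x j) ^ 2 := by
    intro i; field_simp; ring
  simp only [key1]
  have keyC : ∀ i : Fin d,
      deriv h (x i / ∑ j, x j) * ((v i * (∑ j, x j) - x i * (∑ i, v i)) *
          (-(((∑ j, x j) ^ 2) ^ 2)⁻¹ * ((2 * ∑ j, x j) * ∑ i, v i)))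
      = -(2 * (∑ i, v i) / (Real.sqrt (∑ j, x j))^2) *
          (deriv h (x i / ∑ j, x j) * ((v i * (∑ j, x j) - x i * (∑ i, v i)) / (∑ j, x j) ^ 2)) := by
    intro i
    rw [Real.sq_sqrt hs.le]
    field_simp
  have keyD : ∀ i : Fin d,
      (v i * (∑ j, x j) - x i * (∑ i, v i)) / (∑ j, x j) ^ 2 *
        (deriv (deriv h) (x i / ∑ j, x j) * ((v i * (∑ j, x j) - x i * (∑ i, v i)) / (∑ j, x j) ^ 2))
      = deriv (deriv h) (x i / ∑ j, x j) *
          ((v i * (∑ j, x j) - x i * (∑ i, v i)) / (∑ j, x j) ^ 2) ^ 2 := fun i => by ring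
  simp only [Pi.mul_apply, Pi.sub_apply, Function.comp_apply, ← div_eq_mul_inv]
  simp only [keyC, keyD]
  rw [Finset.sum_add_distrib, ← Finset.mul_sum]
  have hrne : Real.sqrt (∑ j, x j) ≠ 0 := hsqpos.ne'
  set T1 := ∑ i, h (x i / ∑ j, x j) with hT1
  set T2 := ∑ i, deriv h (x i / ∑ j, x j) *
      ((v i * (∑ j, x j) - x i * (∑ i, v i)) / (∑ j, x j) ^ 2) with hT2
  set T3 := ∑ i, deriv (deriv h) (x i / ∑ j, x j) *
      ((v i * (∑ j, x j) - x i * (∑ i, v i)) / (∑ j, x j) ^ 2) ^ 2 with hT3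
  set r := Real.sqrt (∑ j, x j) with hr
  field_simp
  ring

theorem tsallis_perspective_hessian_lower_bound
    {d : ℕ} (hd : 1 ≤ d) (h : ℝ → ℝ)
    (hdiff : ∀ y ∈ Set.Icc (0:ℝ) 1, DifferentiableAt ℝ h y ∧ DifferentiableAt ℝ (deriv h) y)
    (hconv : StrictConvexOn ℝ (Set.Icc (0:ℝ) 1) h)
    (hpos'' : ∀ y ∈ Set.Icc (0:ℝ) 1, 0 < deriv (deriv h) y)
    (Y : Set (Fin d → ℝ))
    (hY : Y ⊆ {y : Fin d → ℝ | (∀ i, 0 ≤ y i) ∧ ∑ i, y i = 1})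
    (c lam : ℝ) (hlam : 0 < lam)
    (hcond : ∀ y ∈ Y,
      ∑ i, h (y i) + 2 * ∑ i, (deriv h (y i) - c) ^ 2 / deriv (deriv h) (y i) + lam ≤ 0)
    (H : (Fin d → ℝ) → ℝ)
    (hH : ∀ x : Fin d → ℝ,
      H x = Real.sqrt (∑ i, x i) * ∑ i, h (x i / ∑ j, x j))
    (x : Fin d → ℝ) (hx : ∀ i, 0 < x i)
    (hxY : (fun i => x i / ∑ j, x j) ∈ Y) :
    ∀ v : Fin d → ℝ,
      lam / 4 * (∑ i, x i) ^ (-(3:ℝ)/2) * (∑ i, v i) ^ 2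
        + 1 / 2 * (∑ i, x i) ^ (-(7:ℝ)/2) *
          ∑ i, (x i) ^ 2 * deriv (deriv h) (x i / ∑ j, x j) *
            ((∑ j, v j) - ((∑ j, x j) / x i) * v i) ^ 2
      ≤ fderiv ℝ (fun y => fderiv ℝ H y v) x v := by
  intro v
  have hd0 : 0 < d := hd
  have hs : (0:ℝ) < ∑ i, x i :=
    Finset.sum_pos (fun i _ => hx i) ⟨⟨0, hd0⟩, mem_univ _⟩
  have hsqpos : (0:ℝ) < Real.sqrt (∑ i, x i) := Real.sqrt_pos.mpr hs
  have hmem : ∀ i, x i / (∑ j, x j) ∈ Set.Icc (0:ℝ) 1 := by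
    intro i
    exact ⟨div_nonneg (hx i).le hs.le, by
      rw [div_le_one hs]
      exact Finset.single_le_sum (fun j _ => (hx j).le) (mem_univ i)⟩
  rw [show H = fun z : Fin d → ℝ => Real.sqrt (∑ i, z i) * ∑ i, h (z i / ∑ j, z j)
        from funext hH]
  have hUopen : IsOpen {y : Fin d → ℝ | ∀ i, 0 < y i} := by
    have : {y : Fin d → ℝ | ∀ i, 0 < y i} = Set.pi Set.univ (fun _ => Set.Ioi (0:ℝ)) := by
      ext y; simp [Set.mem_pi]
    rw [this]
    exact isOpen_set_pi Set.finite_univ (fun i _ => isOpen_Ioi)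
  have heq : (fun y : Fin d → ℝ =>
        fderiv ℝ (fun z : Fin d → ℝ => Real.sqrt (∑ i, z i) * ∑ i, h (z i / ∑ j, z j)) y v)
      =ᶠ[nhds x] (fun z : Fin d → ℝ =>
        (∑ i, v i) / (2 * Real.sqrt (∑ i, z i)) * (∑ i, h (z i / ∑ j, z j))
        + Real.sqrt (∑ i, z i) * ∑ i, deriv h (z i / ∑ j, z j) *
            ((v i * (∑ j, z j) - z i * (∑ j, v j)) / (∑ j, z j)^2)) :=
    Filter.eventuallyEq_of_mem (hUopen.mem_nhds (fun i => hx i))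
      (fun y hy => (auxD1 hd0 h (fun t ht => (hdiff t ht).1) y hy v).2)
  rw [heq.fderiv_eq, auxD2 hd0 h hdiff x hx v]
  have hkey32 : (∑ i, x i) ^ ((3:ℝ)/2) = Real.sqrt (∑ i, x i) ^ 3 := by
    rw [show ((3:ℝ)/2) = ((1:ℝ)/2)*3 by norm_num, Real.rpow_mul hs.le, ← Real.sqrt_eq_rpow,
      show ((3:ℝ)) = ((3:ℕ):ℝ) by norm_num, Real.rpow_natCast]
  have hkey72 : (∑ i, x i) ^ ((7:ℝ)/2) = Real.sqrt (∑ i, x i) ^ 7 := by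
    rw [show ((7:ℝ)/2) = ((1:ℝ)/2)*7 by norm_num, Real.rpow_mul hs.le, ← Real.sqrt_eq_rpow,
      show ((7:ℝ)) = ((7:ℕ):ℝ) by norm_num, Real.rpow_natCast]
  have h32 : (∑ i, x i) ^ (-(3:ℝ)/2) = 1 / Real.sqrt (∑ i, x i) ^ 3 := by
    rw [show (-(3:ℝ)/2) = -((3:ℝ)/2) by ring, Real.rpow_neg hs.le, hkey32, one_div]
  have h72 : (∑ i, x i) ^ (-(7:ℝ)/2) = 1 / Real.sqrt (∑ i, x i) ^ 7 := by
    rw [show (-(7:ℝ)/2) = -((7:ℝ)/2) by ring, Real.rpow_neg hs.le, hkey72, one_div]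
  rw [h32, h72]
  have keyA : ∀ i : Fin d,
      x i ^ 2 * deriv (deriv h) (x i / ∑ j, x j) *
          ((∑ j, v j) - (∑ j, x j) / x i * v i) ^ 2
      = Real.sqrt (∑ i, x i) ^ 8 *
          (deriv (deriv h) (x i / ∑ j, x j) *
            ((v i * (∑ j, x j) - x i * (∑ j, v j)) / (∑ j, x j) ^ 2) ^ 2) := by
    intro i
    have h8 : Real.sqrt (∑ i, x i) ^ 8 = (∑ j, x j) ^ 4 := by
      rw [show (8:ℕ) = 2*4 from rfl, pow_mul, Real.sq_sqrt hs.le]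
    have hxi : x i ≠ 0 := (hx i).ne'
    rw [h8]
    field_simp
    ring
  simp only [keyA]
  rw [← Finset.mul_sum]
  have hbpos : ∀ i : Fin d, 0 < deriv (deriv h) (x i / ∑ j, x j) :=
    fun i => hpos'' _ (hmem i)
  have hc : ∑ i, h (x i / ∑ j, x j)
      + 2 * ∑ i, (deriv h (x i / ∑ j, x j) - c) ^ 2 / deriv (deriv h) (x i / ∑ j, x j)
      + lam ≤ 0 := hcond _ hxY
  have hw0 : ∑ i, (v i * (∑ j, x j) - x i * (∑ j, v j)) / (∑ j, x j) ^ 2 = 0 := by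
    rw [← Finset.sum_div]
    have : ∑ i, (v i * (∑ j, x j) - x i * (∑ j, v j)) = 0 := by
      rw [Finset.sum_sub_distrib, ← Finset.sum_mul, ← Finset.sum_mul]
      ring
    rw [this, zero_div]
  have hPT2 : (∑ i, deriv h (x i / ∑ j, x j) *
        ((v i * (∑ j, x j) - x i * (∑ j, v j)) / (∑ j, x j) ^ 2))
      = ∑ i, (deriv h (x i / ∑ j, x j) - c) *
        ((v i * (∑ j, x j) - x i * (∑ j, v j)) / (∑ j, x j) ^ 2) := by
    have e : ∑ i, (deriv h (x i / ∑ j, x j) - c) *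
        ((v i * (∑ j, x j) - x i * (∑ j, v j)) / (∑ j, x j) ^ 2)
        = (∑ i, deriv h (x i / ∑ j, x j) *
            ((v i * (∑ j, x j) - x i * (∑ j, v j)) / (∑ j, x j) ^ 2))
          - c * ∑ i, (v i * (∑ j, x j) - x i * (∑ j, v j)) / (∑ j, x j) ^ 2 := by
      rw [Finset.mul_sum, ← Finset.sum_sub_distrib]
      exact Finset.sum_congr rfl fun i _ => by ring
    rw [e, hw0, mul_zero, sub_zero]
  rw [hPT2]
  have key2 : ∀ i : Fin d,
      0 ≤ 2 * Real.sqrt (∑ i, x i) ^ 4 *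
            (deriv (deriv h) (x i / ∑ j, x j) *
              ((v i * (∑ j, x j) - x i * (∑ j, v j)) / (∑ j, x j) ^ 2) ^ 2)
          - 4 * Real.sqrt (∑ i, x i) ^ 2 * (∑ i, v i) *
            ((deriv h (x i / ∑ j, x j) - c) *
              ((v i * (∑ j, x j) - x i * (∑ j, v j)) / (∑ j, x j) ^ 2))
          + 2 * (∑ i, v i) ^ 2 *
            ((deriv h (x i / ∑ j, x j) - c) ^ 2 / deriv (deriv h) (x i / ∑ j, x j)) := by
    intro i
    set B := deriv (deriv h) (x i / ∑ j, x j) with hB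
    set a := deriv h (x i / ∑ j, x j) - c with ha
    set w := (v i * (∑ j, x j) - x i * (∑ j, v j)) / (∑ j, x j) ^ 2 with hwdef
    set r := Real.sqrt (∑ i, x i) with hrd
    have hBpos : 0 < B := hbpos i
    have h1 : 0 ≤ (r^2 * B * w - (∑ i, v i) * a)^2 / B := div_nonneg (sq_nonneg _) hBpos.le
    have h2 : (r^2 * B * w - (∑ i, v i) * a)^2 / B
        = r^4 * (B * w^2) - 2 * r^2 * (∑ i, v i) * (a * w) + (∑ i, v i)^2 * (a^2 / B) := by
      field_simp
      ring
    rw [h2] at h1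
    nlinarith [h1]
  have A3 : 0 ≤ 2 * Real.sqrt (∑ i, x i) ^ 4 *
        (∑ i, deriv (deriv h) (x i / ∑ j, x j) *
          ((v i * (∑ j, x j) - x i * (∑ j, v j)) / (∑ j, x j) ^ 2) ^ 2)
      - 4 * Real.sqrt (∑ i, x i) ^ 2 * (∑ i, v i) *
        (∑ i, (deriv h (x i / ∑ j, x j) - c) *
          ((v i * (∑ j, x j) - x i * (∑ j, v j)) / (∑ j, x j) ^ 2))
      + 2 * (∑ i, v i) ^ 2 *
        (∑ i, (deriv h (x i / ∑ j, x j) - c) ^ 2 / deriv (deriv h) (x i / ∑ j, x j)) := by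
    have hsum := Finset.sum_nonneg (fun i (_ : i ∈ univ) => key2 i)
    have e : ∑ i, (2 * Real.sqrt (∑ i, x i) ^ 4 *
            (deriv (deriv h) (x i / ∑ j, x j) *
              ((v i * (∑ j, x j) - x i * (∑ j, v j)) / (∑ j, x j) ^ 2) ^ 2)
          - 4 * Real.sqrt (∑ i, x i) ^ 2 * (∑ i, v i) *
            ((deriv h (x i / ∑ j, x j) - c) *
              ((v i * (∑ j, x j) - x i * (∑ j, v j)) / (∑ j, x j) ^ 2))
          + 2 * (∑ i, v i) ^ 2 *
            ((deriv h (x i / ∑ j, x j) - c) ^ 2 / deriv (deriv h) (x i / ∑ j, x j)))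
        = 2 * Real.sqrt (∑ i, x i) ^ 4 *
            (∑ i, deriv (deriv h) (x i / ∑ j, x j) *
              ((v i * (∑ j, x j) - x i * (∑ j, v j)) / (∑ j, x j) ^ 2) ^ 2)
          - 4 * Real.sqrt (∑ i, x i) ^ 2 * (∑ i, v i) *
            (∑ i, (deriv h (x i / ∑ j, x j) - c) *
              ((v i * (∑ j, x j) - x i * (∑ j, v j)) / (∑ j, x j) ^ 2))
          + 2 * (∑ i, v i) ^ 2 *
            (∑ i, (deriv h (x i / ∑ j, x j) - c) ^ 2 / deriv (deriv h) (x i / ∑ j, x j)) := by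
      rw [Finset.sum_add_distrib, Finset.sum_sub_distrib, ← Finset.mul_sum, ← Finset.mul_sum,
        ← Finset.mul_sum]
    rw [e] at hsum
    exact hsum
  set r := Real.sqrt (∑ i, x i) with hrd
  set T1 := ∑ i, h (x i / ∑ j, x j) with hT1
  set P := ∑ i, (deriv h (x i / ∑ j, x j) - c) *
      ((v i * (∑ j, x j) - x i * (∑ j, v j)) / (∑ j, x j) ^ 2) with hP
  set T3 := ∑ i, deriv (deriv h) (x i / ∑ j, x j) *
      ((v i * (∑ j, x j) - x i * (∑ j, v j)) / (∑ j, x j) ^ 2) ^ 2 with hT3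
  set Q := ∑ i, (deriv h (x i / ∑ j, x j) - c) ^ 2 / deriv (deriv h) (x i / ∑ j, x j) with hQ
  set sg := ∑ i, v i with hsg
  have hrpos : 0 < r := hsqpos
  clear_value r T1 P T3 Q sg
  have hlhs : lam / 4 * (1 / r ^ 3) * sg ^ 2 + 1 / 2 * (1 / r ^ 7) * (r ^ 8 * T3)
      = (lam * sg ^ 2 + 2 * r ^ 4 * T3) / (4 * r ^ 3) := by
    field_simp
    ring
  have hrhs : -(sg ^ 2 / (4 * r ^ 3)) * T1 - sg / r * P + r * T3
      = (-(sg ^ 2 * T1) - 4 * r ^ 2 * sg * P + 4 * r ^ 4 * T3) / (4 * r ^ 3) := by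
    field_simp
  rw [hlhs, hrhs]
  have hcs : sg ^ 2 * (T1 + 2 * Q + lam) ≤ 0 :=
    mul_nonpos_of_nonneg_of_nonpos (sq_nonneg _) hc
  have hmain : lam * sg ^ 2 + 2 * r ^ 4 * T3
      ≤ -(sg ^ 2 * T1) - 4 * r ^ 2 * sg * P + 4 * r ^ 4 * T3 := by nlinarith [hcs, A3]
  exact (div_le_div_iff_of_pos_right (by positivity)).mpr hmain
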